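/- (1) The quasi-compact open subsets of Spec_S R with respect to the S-flat topology are exactly the sets V_S(I) where I is a finitely generated ideal of R. (2) Spec_S R is quasi-compact with respect to the S-flat topology. (3) For an ideal I of R, V_S(I) is open with respect to the S-flat topology if and only if √[S](I) = √[S](J) for some finitely generated ideal J of R. -/

import Mathlib

/-- An ideal `P` is `S`-prime if `P ∩ S = ∅` and there is `s ∈ S` such that
whenever `a * b ∈ P`, either `s * a ∈ P` or `s * b ∈ P`. -/
def IsSPrime {R : Type*} [CommRing R] (S : Set R) (P : Ideal R) : Prop :=
  (P : Set R) ∩ S = ∅ ∧ ∃ s ∈ S, ∀ a b : R, a * b ∈ P → s * a ∈ P ∨ s * b ∈ P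

/-- The `S`-prime spectrum `Spec_S R`: the set of all `S`-prime ideals of `R`. -/
def SSpec {R : Type*} [CommRing R] (S : Set R) : Type _ :=
  {P : Ideal R // IsSPrime S P}

/-- The `S`-variety of an ideal `I`:
`V_S(I) = {P ∈ Spec_S R | s • I ⊆ P for some s ∈ S}`. -/
def SVar {R : Type*} [CommRing R] (S : Set R) (I : Ideal R) : Set (SSpec S) :=
  {P | ∃ s ∈ S, ∀ x ∈ I, s * x ∈ P.1}

/-- The `S`-radical of an ideal `I`:
`√[S](I) = {a ∈ R | s * a ^ n ∈ I for some s ∈ S, n ∈ ℕ}`. -/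
def SRad {R : Type*} [CommRing R] (S : Set R) (I : Ideal R) : Set R :=
  {a | ∃ s ∈ S, ∃ n : ℕ, s * a ^ n ∈ I}

/-- The `S`-Zariski topology on `Spec_S R`: the closed sets are exactly the `V_S(I)`. -/
def sZariskiTop {R : Type*} [CommRing R] (S : Set R) : TopologicalSpace (SSpec S) :=
  TopologicalSpace.generateFrom {U | ∃ I : Ideal R, U = (SVar S I)ᶜ}

/-- The `S`-flat topology on `Spec_S R`: the coarsest topology in which every
`V_S(f)`, `f ∈ R`, is open. -/
def sFlatTop {R : Type*} [CommRing R] (S : Set R) : TopologicalSpace (SSpec S) :=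
  TopologicalSpace.generateFrom {U | ∃ f : R, U = SVar S (Ideal.span {f})}

/-- An ideal `I` is `S`-radically finite if `√[S](I) = √[S](J)` for some finitely
generated ideal `J`. -/
def SRadFinite {R : Type*} [CommRing R] (S : Set R) (I : Ideal R) : Prop :=
  ∃ J : Ideal R, J.FG ∧ SRad S I = SRad S J

section Aux

variable {R : Type*} [CommRing R] {S : Set R}

lemma sprime_disjoint {P : Ideal R} (hP : IsSPrime S P) : ∀ x ∈ S, x ∉ P := by
  intro x hxS hxP
  have hx : x ∈ (P : Set R) ∩ S := ⟨hxP, hxS⟩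
  rw [hP.1] at hx
  exact hx

lemma svar_mono {I J : Ideal R} (h : I ≤ J) : SVar S J ⊆ SVar S I := by
  rintro P ⟨s, hs, hsub⟩
  exact ⟨s, hs, fun x hx => hsub x (h hx)⟩

lemma mem_svar_span_singleton {P : SSpec S} {s f : R} (hs : s ∈ S)
    (h : s * f ∈ P.1) : P ∈ SVar S (Ideal.span {f}) := by
  refine ⟨s, hs, fun x hx => ?_⟩
  obtain ⟨c, hc⟩ := Ideal.mem_span_singleton'.mp hx
  rw [← hc, show s * (c * f) = c * (s * f) by ring]
  exact P.1.mul_mem_left c h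

lemma key_list (hSmul : ∀ s ∈ S, ∀ t ∈ S, s * t ∈ S)
    {P : Ideal R} (hPd : ∀ x ∈ S, x ∉ P) {u : R} (huS : u ∈ S)
    (hu : ∀ a b : R, a * b ∈ P → u * a ∈ P ∨ u * b ∈ P) :
    ∀ (l : List R) (v : R), v ∈ S → v * l.prod ∈ P → ∃ g ∈ l, u * g ∈ P := by
  intro l
  induction l with
  | nil =>
    intro v hv hvp
    rw [List.prod_nil, mul_one] at hvp
    exact absurd hvp (hPd v hv)
  | cons g t ih =>
    intro v hv hvp
    rw [List.prod_cons] at hvp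
    have hvp' : (v * t.prod) * g ∈ P := by
      rw [show (v * t.prod) * g = v * (g * t.prod) by ring]; exact hvp
    rcases hu (v * t.prod) g hvp' with h | h
    · have h' : (u * v) * t.prod ∈ P := by rw [mul_assoc]; exact h
      obtain ⟨g', hg', hug'⟩ := ih (u * v) (hSmul u huS v hv) h'
      exact ⟨g', List.mem_cons_of_mem _ hg', hug'⟩
    · exact ⟨g, List.mem_cons_self, h⟩

lemma key_pow (hSmul : ∀ s ∈ S, ∀ t ∈ S, s * t ∈ S)
    {P : Ideal R} (hPd : ∀ x ∈ S, x ∉ P) {u : R} (huS : u ∈ S)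
    (hu : ∀ a b : R, a * b ∈ P → u * a ∈ P ∨ u * b ∈ P)
    {a v : R} (hv : v ∈ S) {n : ℕ} (h : v * a ^ n ∈ P) : u * a ∈ P := by
  obtain ⟨g, hg, hug⟩ := key_list hSmul hPd huS hu (List.replicate n a) v hv
    (by rwa [List.prod_replicate])
  rwa [List.eq_of_mem_replicate hg] at hug

lemma svar_subset_of_mem_srad (hSmul : ∀ s ∈ S, ∀ t ∈ S, s * t ∈ S)
    {I : Ideal R} {a : R} (ha : a ∈ SRad S I) :
    SVar S I ⊆ SVar S (Ideal.span {a}) := by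
  obtain ⟨s, hs, n, hsan⟩ := ha
  rintro P ⟨t, ht, htI⟩
  obtain ⟨hPe, u, huS, hu⟩ := P.2
  have hPd : ∀ x ∈ S, x ∉ P.1 := sprime_disjoint ⟨hPe, u, huS, hu⟩
  have h1 : (t * s) * a ^ n ∈ P.1 := by
    rw [mul_assoc]; exact htI _ hsan
  exact mem_svar_span_singleton huS (key_pow hSmul hPd huS hu (hSmul t ht s hs) h1)

lemma mem_srad_of_svar_subset (hS1 : (1 : R) ∈ S)
    (hSmul : ∀ s ∈ S, ∀ t ∈ S, s * t ∈ S) {I : Ideal R} {a : R}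
    (h : SVar S I ⊆ SVar S (Ideal.span {a})) : a ∈ SRad S I := by
  by_contra hna
  have hna' : ∀ s ∈ S, ∀ n : ℕ, s * a ^ n ∉ I := by
    intro s hs n hmem
    exact hna ⟨s, hs, n, hmem⟩
  let M : Submonoid R :=
    { carrier := {x | ∃ s ∈ S, ∃ n : ℕ, s * a ^ n = x}
      mul_mem' := by
        rintro x y ⟨s, hs, n, rfl⟩ ⟨t, ht, m, rfl⟩
        exact ⟨s * t, hSmul s hs t ht, n + m, by ring⟩
      one_mem' := ⟨1, hS1, 0, by ring⟩ }
  have hdisj : Disjoint (I : Set R) (M : Set R) := by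
    rw [Set.disjoint_left]
    rintro x hxI ⟨s, hs, n, rfl⟩
    exact hna' s hs n hxI
  obtain ⟨p, hp, hIp, hpd⟩ := Ideal.exists_le_prime_disjoint I M hdisj
  have hpd' : ∀ x ∈ M, x ∉ p := fun x hx hxp => Set.disjoint_left.mp hpd hxp hx
  have hsp : IsSPrime S p := by
    constructor
    · ext x
      simp only [Set.mem_inter_iff, Set.mem_empty_iff_false, iff_false, not_and]
      intro hxp hxS
      exact hpd' x ⟨x, hxS, 0, by ring⟩ hxp
    · refine ⟨1, hS1, fun b c hbc => ?_⟩
      rcases hp.mem_or_mem hbc with hb | hc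
      · exact Or.inl (by rwa [one_mul])
      · exact Or.inr (by rwa [one_mul])
  have hPmem : (⟨p, hsp⟩ : SSpec S) ∈ SVar S I :=
    ⟨1, hS1, fun x hx => by rw [one_mul]; exact hIp hx⟩
  obtain ⟨t, ht, htx⟩ := h hPmem
  have hta : t * a ∈ p := htx a (Ideal.mem_span_singleton_self a)
  exact hpd' (t * a) ⟨t, ht, 1, by ring⟩ hta

lemma mem_srad_iff_svar_subset (hS1 : (1 : R) ∈ S)
    (hSmul : ∀ s ∈ S, ∀ t ∈ S, s * t ∈ S) {I : Ideal R} {a : R} :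
    a ∈ SRad S I ↔ SVar S I ⊆ SVar S (Ideal.span {a}) :=
  ⟨svar_subset_of_mem_srad hSmul, mem_srad_of_svar_subset hS1 hSmul⟩

lemma srad_eq_of_svar_eq (hS1 : (1 : R) ∈ S)
    (hSmul : ∀ s ∈ S, ∀ t ∈ S, s * t ∈ S) {I J : Ideal R}
    (h : SVar S I = SVar S J) : SRad S I = SRad S J := by
  ext a
  rw [mem_srad_iff_svar_subset hS1 hSmul, mem_srad_iff_svar_subset hS1 hSmul, h]

lemma svar_subset_of_le_srad (hSmul : ∀ s ∈ S, ∀ t ∈ S, s * t ∈ S)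
    {I J : Ideal R} (h : (J : Set R) ⊆ SRad S I) : SVar S I ⊆ SVar S J := by
  rintro P ⟨t, ht, htI⟩
  obtain ⟨hPe, u, huS, hu⟩ := P.2
  have hPd : ∀ x ∈ S, x ∉ P.1 := sprime_disjoint ⟨hPe, u, huS, hu⟩
  refine ⟨u, huS, fun x hx => ?_⟩
  obtain ⟨s, hs, n, hsxn⟩ := h hx
  have h1 : (t * s) * x ^ n ∈ P.1 := by rw [mul_assoc]; exact htI _ hsxn
  exact key_pow hSmul hPd huS hu (hSmul t ht s hs) h1

lemma svar_eq_of_srad_eq (hS1 : (1 : R) ∈ S)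
    (hSmul : ∀ s ∈ S, ∀ t ∈ S, s * t ∈ S) {I J : Ideal R}
    (h : SRad S I = SRad S J) : SVar S I = SVar S J := by
  have hJI : (J : Set R) ⊆ SRad S I := by
    intro j hj
    rw [h]
    exact ⟨1, hS1, 1, by rw [pow_one, one_mul]; exact hj⟩
  have hIJ : (I : Set R) ⊆ SRad S J := by
    intro i hi
    rw [← h]
    exact ⟨1, hS1, 1, by rw [pow_one, one_mul]; exact hi⟩
  exact le_antisymm (svar_subset_of_le_srad hSmul hJI) (svar_subset_of_le_srad hSmul hIJ)

lemma svar_bot (hS1 : (1 : R) ∈ S) : SVar S (⊥ : Ideal R) = Set.univ := by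
  refine Set.eq_univ_of_forall fun P => ⟨1, hS1, fun x hx => ?_⟩
  rw [Ideal.mem_bot] at hx
  rw [hx, mul_zero]
  exact P.1.zero_mem

lemma svar_top : SVar S (⊤ : Ideal R) = ∅ := by
  rw [Set.eq_empty_iff_forall_notMem]
  rintro P ⟨s, hs, h⟩
  have := h 1 trivial
  rw [mul_one] at this
  exact sprime_disjoint P.2 s hs this

lemma svar_sup (hSmul : ∀ s ∈ S, ∀ t ∈ S, s * t ∈ S) (I J : Ideal R) :
    SVar S (I ⊔ J) = SVar S I ∩ SVar S J := by
  apply Set.Subset.antisymm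
  · intro P hP
    exact ⟨svar_mono le_sup_left hP, svar_mono le_sup_right hP⟩
  · rintro P ⟨⟨s, hs, hsI⟩, ⟨t, ht, htJ⟩⟩
    refine ⟨s * t, hSmul s hs t ht, fun x hx => ?_⟩
    obtain ⟨y, hy, z, hz, rfl⟩ := Submodule.mem_sup.mp hx
    rw [show s * t * (y + z) = t * (s * y) + s * (t * z) by ring]
    exact P.1.add_mem (P.1.mul_mem_left _ (hsI y hy)) (P.1.mul_mem_left _ (htJ z hz))

lemma svar_mul (hSmul : ∀ s ∈ S, ∀ t ∈ S, s * t ∈ S) (I J : Ideal R) :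
    SVar S (I * J) = SVar S I ∪ SVar S J := by
  apply Set.Subset.antisymm
  · rintro P ⟨s, hs, hsIJ⟩
    by_contra hP
    rw [Set.mem_union, not_or] at hP
    obtain ⟨hPI, hPJ⟩ := hP
    obtain ⟨hPe, u, huS, hu⟩ := P.2
    have hne : ¬ ∀ x ∈ I, (u * s) * x ∈ P.1 := fun hc => hPI ⟨u * s, hSmul u huS s hs, hc⟩
    push_neg at hne
    obtain ⟨a, haI, ha⟩ := hne
    apply hPJ
    refine ⟨u, huS, fun b hb => ?_⟩
    have hab : (s * a) * b ∈ P.1 := by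
      rw [show (s * a) * b = s * (a * b) by ring]
      exact hsIJ _ (Ideal.mul_mem_mul haI hb)
    rcases hu (s * a) b hab with h | h
    · exact absurd (by rw [show u * (s * a) = (u * s) * a by ring] at h; exact h) ha
    · exact h
  · rintro P (h | h)
    · exact svar_mono Ideal.mul_le_left h
    · exact svar_mono Ideal.mul_le_right h

lemma svar_finset_prod (hSmul : ∀ s ∈ S, ∀ t ∈ S, s * t ∈ S)
    {ι : Type*} (T : Finset ι) (J : ι → Ideal R) :
    SVar S (∏ i ∈ T, J i) = ⋃ i ∈ T, SVar S (J i) := by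
  classical
  induction T using Finset.induction_on with
  | empty => simp [Ideal.one_eq_top, svar_top]
  | insert _ _ hnotmem ih =>
    rw [Finset.prod_insert hnotmem, svar_mul hSmul, ih]
    simp [Set.biUnion_insert]

lemma fg_finset_prod {ι : Type*} (T : Finset ι) (J : ι → Ideal R)
    (h : ∀ i ∈ T, (J i).FG) : (∏ i ∈ T, J i).FG := by
  classical
  induction T using Finset.induction_on with
  | empty =>
    rw [Finset.prod_empty]
    exact ⟨{1}, by simp [Ideal.one_eq_top]⟩
  | @insert a T hnotmem ih =>
    rw [Finset.prod_insert hnotmem]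
    exact Submodule.FG.mul (h a (Finset.mem_insert_self a T))
      (ih fun i hi => h i (Finset.mem_insert_of_mem hi))

lemma svar_open_of_fg (hS1 : (1 : R) ∈ S) (hSmul : ∀ s ∈ S, ∀ t ∈ S, s * t ∈ S)
    {J : Ideal R} (hJ : J.FG) : @IsOpen (SSpec S) (sFlatTop S) (SVar S J) := by
  letI := sFlatTop S
  obtain ⟨T, rfl⟩ := hJ
  classical
  induction T using Finset.induction_on with
  | empty =>
    rw [Finset.coe_empty, Ideal.span_empty, svar_bot hS1]
    exact isOpen_univ
  | @insert a T hnotmem ih =>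
    rw [Finset.coe_insert, Ideal.span_insert, svar_sup hSmul]
    refine IsOpen.inter ?_ ih
    exact TopologicalSpace.isOpen_generateFrom_of_mem ⟨a, rfl⟩

lemma split_list (hS1 : (1 : R) ∈ S) (hSmul : ∀ s ∈ S, ∀ t ∈ S, s * t ∈ S)
    {G : Set R} :
    ∀ l : List R, (∀ y ∈ l, y ∈ S ∪ G) →
      ∃ s ∈ S, ∃ lg : List R, (∀ g ∈ lg, g ∈ G) ∧ l.prod = s * lg.prod := by
  intro l
  induction l with
  | nil => exact fun _ => ⟨1, hS1, [], fun g hg => absurd hg List.not_mem_nil, by simp⟩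
  | cons y t ih =>
    intro h
    obtain ⟨s, hs, lg, hlg, hprod⟩ := ih fun z hz => h z (List.mem_cons_of_mem _ hz)
    rcases h y List.mem_cons_self with hy | hy
    · exact ⟨y * s, hSmul y hy s hs, lg, hlg, by rw [List.prod_cons, hprod]; ring⟩
    · refine ⟨s, hs, y :: lg, ?_, by rw [List.prod_cons, hprod, List.prod_cons]; ring⟩
      intro g hg
      rcases List.mem_cons.mp hg with rfl | hg'
      · exact hy
      · exact hlg g hg'

lemma svar_isCompact (hS1 : (1 : R) ∈ S) (hSmul : ∀ s ∈ S, ∀ t ∈ S, s * t ∈ S)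
    (I : Ideal R) : @IsCompact (SSpec S) (sFlatTop S) (SVar S I) := by
  letI := sFlatTop S
  rw [isCompact_iff_ultrafilter_le_nhds]
  intro F hF
  rw [Filter.le_principal_iff] at hF
  set G : Set R := {g | SVar S (Ideal.span {g}) ∉ F} with hGdef
  by_cases hM : ∀ x ∈ I, x ∉ Submonoid.closure (S ∪ G)
  · have hdisj : Disjoint (I : Set R) (Submonoid.closure (S ∪ G) : Set R) :=
      Set.disjoint_left.mpr hM
    obtain ⟨p, hp, hIp, hpd⟩ := Ideal.exists_le_prime_disjoint I _ hdisj
    have hpd' : ∀ x ∈ Submonoid.closure (S ∪ G), x ∉ p := fun x hx hxp =>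
      Set.disjoint_left.mp hpd hxp hx
    have hsp : IsSPrime S p := by
      constructor
      · ext x
        simp only [Set.mem_inter_iff, Set.mem_empty_iff_false, iff_false, not_and]
        intro hxp hxS
        exact hpd' x (Submonoid.subset_closure (Or.inl hxS)) hxp
      · refine ⟨1, hS1, fun b c hbc => ?_⟩
        rcases hp.mem_or_mem hbc with hb | hc
        · exact Or.inl (by rwa [one_mul])
        · exact Or.inr (by rwa [one_mul])
    refine ⟨⟨p, hsp⟩, ⟨1, hS1, fun x hx => by rw [one_mul]; exact hIp hx⟩, ?_⟩
    show (F : Filter (SSpec S)) ≤ @nhds _ (sFlatTop S) _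
    unfold sFlatTop
    refine le_of_le_of_eq ?_ TopologicalSpace.nhds_generateFrom.symm
    refine le_iInf₂ fun s hs => ?_
    obtain ⟨hmem, f, rfl⟩ := hs
    rw [Filter.le_principal_iff]
    by_contra hnot
    have hfG : f ∈ G := hnot
    obtain ⟨t, ht, htf⟩ := hmem
    have htp : t * f ∈ p := htf f (Ideal.mem_span_singleton_self f)
    exact hpd' (t * f)
      (Submonoid.mul_mem _ (Submonoid.subset_closure (Or.inl ht))
        (Submonoid.subset_closure (Or.inr hfG))) htp
  · push_neg at hM
    obtain ⟨x, hxI, hxM⟩ := hM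
    obtain ⟨l, hl, hlprod⟩ := Submonoid.exists_list_of_mem_closure hxM
    obtain ⟨s, hs, lg, hlg, hprod⟩ := split_list hS1 hSmul l hl
    exfalso
    have h1 : (⋂ g ∈ {g | g ∈ lg}, (SVar S (Ideal.span {g}))ᶜ) ∈ (F : Filter (SSpec S)) :=
      (Filter.biInter_mem (List.finite_toSet lg)).mpr fun g hg =>
        Ultrafilter.compl_mem_iff_notMem.mpr (hlg g hg)
    have h2 : SVar S I ∩ (⋂ g ∈ {g | g ∈ lg}, (SVar S (Ideal.span {g}))ᶜ) ∈ (F : Filter (SSpec S)) :=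
      Filter.inter_mem hF h1
    have h3 : SVar S I ∩ (⋂ g ∈ {g | g ∈ lg}, (SVar S (Ideal.span {g}))ᶜ) = ∅ := by
      rw [Set.eq_empty_iff_forall_notMem]
      rintro P ⟨hPI, hPc⟩
      obtain ⟨t, ht, htI⟩ := hPI
      obtain ⟨hPe, u, huS, hu⟩ := P.2
      have hPd : ∀ y ∈ S, y ∉ P.1 := sprime_disjoint ⟨hPe, u, huS, hu⟩
      have hsx : (t * s) * lg.prod ∈ P.1 := by
        rw [mul_assoc, ← hprod, hlprod]
        exact htI x hxI
      obtain ⟨g, hg, hug⟩ := key_list hSmul hPd huS hu lg (t * s) (hSmul t ht s hs) hsx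
      have hmem : P ∈ SVar S (Ideal.span {g}) := mem_svar_span_singleton huS hug
      exact (Set.mem_iInter₂.mp hPc g hg) hmem
    rw [h3] at h2
    exact Filter.empty_notMem (F : Filter (SSpec S)) h2

end Aux

/-- (1) The quasi-compact open subsets of `Spec_S R` for the `S`-flat topology are
exactly the `V_S(I)` with `I` finitely generated; (2) `Spec_S R` is quasi-compact for
the `S`-flat topology; (3) `V_S(I)` is `S`-flat open iff `√[S](I) = √[S](J)` for some
finitely generated ideal `J`. -/
theorem sFlat_compact_open_characterizations {R : Type*} [CommRing R] [Nontrivial R]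
    (S : Set R)
    (hS0 : (0 : R) ∉ S) (hS1 : (1 : R) ∈ S) (hSmul : ∀ s ∈ S, ∀ t ∈ S, s * t ∈ S) :
    (∀ U : Set (SSpec S),
        (@IsCompact (SSpec S) (sFlatTop S) U ∧ @IsOpen (SSpec S) (sFlatTop S) U) ↔
          ∃ I : Ideal R, I.FG ∧ U = SVar S I) ∧
    @IsCompact (SSpec S) (sFlatTop S) Set.univ ∧
    ∀ I : Ideal R,
      @IsOpen (SSpec S) (sFlatTop S) (SVar S I) ↔
        ∃ J : Ideal R, J.FG ∧ SRad S I = SRad S J := by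
  letI := sFlatTop S
  classical
  -- the basis of `V_S(J)` for finitely generated `J`
  have hbasis : TopologicalSpace.IsTopologicalBasis
      (Set.range fun J : {J : Ideal R // J.FG} => SVar S J.1) := by
    refine ⟨?_, ?_, ?_⟩
    · rintro t₁ ⟨⟨J₁, h₁⟩, rfl⟩ t₂ ⟨⟨J₂, h₂⟩, rfl⟩ x hx
      refine ⟨SVar S (J₁ ⊔ J₂), ⟨⟨J₁ ⊔ J₂, Submodule.FG.sup h₁ h₂⟩, rfl⟩, ?_, ?_⟩
      · rwa [svar_sup hSmul]
      · rw [svar_sup hSmul]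
    · rw [Set.sUnion_eq_univ_iff]
      intro P
      exact ⟨SVar S ⊥, ⟨⟨⊥, Submodule.fg_bot⟩, rfl⟩, by rw [svar_bot hS1]; trivial⟩
    · refine le_antisymm ?_ ?_
      · refine le_generateFrom ?_
        rintro _ ⟨⟨J, hJ⟩, rfl⟩
        exact svar_open_of_fg hS1 hSmul hJ
      · refine TopologicalSpace.generateFrom_anti ?_
        rintro _ ⟨f, rfl⟩
        exact ⟨⟨Ideal.span {f}, ⟨{f}, by simp⟩⟩, rfl⟩
  have hcompact : ∀ I : Ideal R, IsCompact (SVar S I) := svar_isCompact hS1 hSmul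
  have part1 : ∀ U : Set (SSpec S),
      (IsCompact U ∧ IsOpen U) ↔ ∃ I : Ideal R, I.FG ∧ U = SVar S I := by
    intro U
    constructor
    · intro hU
      obtain ⟨t, htfin, rfl⟩ :=
        (isCompact_open_iff_eq_finite_iUnion_of_isTopologicalBasis
          (fun J : {J : Ideal R // J.FG} => SVar S J.1) hbasis
          (fun J => hcompact J.1) U).mp hU
      refine ⟨∏ J ∈ htfin.toFinset, J.1, fg_finset_prod _ _ fun J _ => J.2, ?_⟩
      rw [svar_finset_prod hSmul]
      ext P
      simp only [Set.mem_iUnion, Set.Finite.mem_toFinset]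
    · rintro ⟨I, hIfg, rfl⟩
      exact ⟨hcompact I, svar_open_of_fg hS1 hSmul hIfg⟩
  refine ⟨part1, ?_, ?_⟩
  · rw [← svar_bot (S := S) hS1]
    exact hcompact ⊥
  · intro I
    constructor
    · intro hopen
      obtain ⟨J, hJfg, hJeq⟩ := (part1 (SVar S I)).mp ⟨hcompact I, hopen⟩
      exact ⟨J, hJfg, srad_eq_of_svar_eq hS1 hSmul hJeq⟩
    · rintro ⟨J, hJfg, hrad⟩
      rw [svar_eq_of_srad_eq hS1 hSmul hrad]
      exact svar_open_of_fg hS1 hSmul hJfg
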